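/- For measurable functions x, y on [0,∞) vanishing at infinity in measure, the product xy is submajorized by the product of the decreasing rearrangements: ∫₀ᵗ (xy)*(s) ds ≤ ∫₀ᵗ x*(s) y*(s) ds for every t > 0. -/

import Mathlib

open MeasureTheory

/-- The decreasing rearrangement of `|f|` with respect to the measure `μ`. -/
noncomputable def rearr {α : Type*} [MeasurableSpace α] (μ : Measure α)
    (f : α → ℝ) (t : ℝ) : ℝ :=
  sInf {s : ℝ | 0 ≤ s ∧ μ {u | s < |f u|} ≤ ENNReal.ofReal t}

/-- `f` vanishes at infinity in measure: every level set `{|f| > ε}` with `ε > 0`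
has finite measure. -/
def VanishesInMeasure {α : Type*} [MeasurableSpace α] (μ : Measure α) (f : α → ℝ) : Prop :=
  ∀ ε : ℝ, 0 < ε → μ {u | ε < |f u|} < ⊤

/-- A symmetric function space on a measure space: a linear subspace of the measurable
functions vanishing at infinity in measure, with a complete norm that is monotone with
respect to comparison of decreasing rearrangements. -/
structure SymmFnSpace (α : Type*) [MeasurableSpace α] (μ : Measure α) where
  carrier : Set (α → ℝ)
  N : (α → ℝ) → ℝ
  zero_mem : (0 : α → ℝ) ∈ carrier
  add_mem : ∀ {x y : α → ℝ}, x ∈ carrier → y ∈ carrier → x + y ∈ carrier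
  smul_mem : ∀ (c : ℝ) {x : α → ℝ}, x ∈ carrier → c • x ∈ carrier
  measurable_mem : ∀ {x : α → ℝ}, x ∈ carrier → Measurable x
  vanish_mem : ∀ {x : α → ℝ}, x ∈ carrier → VanishesInMeasure μ x
  norm_nonneg : ∀ x : α → ℝ, 0 ≤ N x
  norm_eq_zero : ∀ {x : α → ℝ}, x ∈ carrier → N x = 0 → x =ᵐ[μ] 0
  norm_add_le : ∀ {x y : α → ℝ}, x ∈ carrier → y ∈ carrier → N (x + y) ≤ N x + N y
  norm_smul : ∀ (c : ℝ) (x : α → ℝ), N (c • x) = |c| * N x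
  symm : ∀ {x y : α → ℝ}, Measurable x → VanishesInMeasure μ x → y ∈ carrier →
    (∀ t : ℝ, 0 < t → rearr μ x t ≤ rearr μ y t) → x ∈ carrier ∧ N x ≤ N y
  complete : ∀ f : ℕ → (α → ℝ), (∀ n, f n ∈ carrier) →
    (∀ ε : ℝ, 0 < ε → ∃ n₀, ∀ m ≥ n₀, ∀ n ≥ n₀, N (f m - f n) < ε) →
    ∃ g ∈ carrier, ∀ ε : ℝ, 0 < ε → ∃ n₀, ∀ n ≥ n₀, N (f n - g) < ε

open scoped ENNReal

/-- Lebesgue measure on the half-line `[0, ∞)`. -/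
noncomputable def mu0 : MeasureTheory.Measure ℝ := MeasureTheory.volume.restrict (Set.Ici 0)

section aux

open Set

variable {α : Type*} [MeasurableSpace α] {μ : Measure α} {f : α → ℝ}

theorem rearr_nonneg (μ : Measure α) (f : α → ℝ) (t : ℝ) : 0 ≤ rearr μ f t :=
  Real.sInf_nonneg fun _ hs => hs.1

theorem dist_antitone {l l' : ℝ} (h : l ≤ l') :
    μ {u | l' < |f u|} ≤ μ {u | l < |f u|} :=
  measure_mono fun u hu => lt_of_le_of_lt h hu

theorem rearr_set_nonempty (hm : Measurable f) (hv : VanishesInMeasure μ f) {t : ℝ}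
    (ht : 0 < t) :
    {s : ℝ | 0 ≤ s ∧ μ {u | s < |f u|} ≤ ENNReal.ofReal t}.Nonempty := by
  have hmono : Antitone (fun n : ℕ => {u | (n:ℝ)+1 < |f u|}) := by
    intro n m hnm u hu
    simp only [mem_setOf_eq] at hu ⊢
    have h1 : (n:ℝ) ≤ m := Nat.cast_le.2 hnm
    linarith
  have hempty : (⋂ n : ℕ, {u | (n:ℝ)+1 < |f u|}) = ∅ := by
    ext u
    simp only [mem_iInter, mem_setOf_eq, mem_empty_iff_false, iff_false, not_forall, not_lt]
    obtain ⟨n, hn⟩ := exists_nat_gt (|f u|)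
    exact ⟨n, by linarith⟩
  have hms : ∀ n : ℕ, MeasurableSet {u | (n:ℝ)+1 < |f u|} := fun n =>
    measurableSet_lt measurable_const hm.abs
  have hfin : μ {u | ((0:ℕ):ℝ)+1 < |f u|} ≠ ⊤ := by
    have : {u | ((0:ℕ):ℝ)+1 < |f u|} = {u | 1 < |f u|} := by norm_num
    rw [this]; exact (hv 1 one_pos).ne
  have htend := tendsto_measure_iInter_atTop
    (fun n : ℕ => (hms n).nullMeasurableSet) hmono ⟨0, hfin⟩
  rw [hempty, measure_empty] at htend
  have hlt : ∀ᶠ n : ℕ in Filter.atTop, μ {u | (n:ℝ)+1 < |f u|} < ENNReal.ofReal t :=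
    htend.eventually_lt_const (by simp [ht])
  obtain ⟨n, hn⟩ := hlt.exists
  exact ⟨(n:ℝ)+1, by positivity, hn.le⟩

theorem rearr_le_iff (hm : Measurable f) (hv : VanishesInMeasure μ f) {t l : ℝ}
    (ht : 0 < t) (hl : 0 < l) :
    rearr μ f t ≤ l ↔ μ {u | l < |f u|} ≤ ENNReal.ofReal t := by
  constructor
  · intro hle
    have hU : {u | l < |f u|} = ⋃ n : ℕ, {u | l + ((n:ℝ)+1)⁻¹ < |f u|} := by
      ext u
      simp only [mem_setOf_eq, mem_iUnion]
      constructor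
      · intro hu
        obtain ⟨n, hn⟩ := exists_nat_one_div_lt (sub_pos.2 hu)
        rw [one_div] at hn
        exact ⟨n, by linarith⟩
      · rintro ⟨n, hn⟩
        have h0 : (0:ℝ) < ((n:ℝ)+1)⁻¹ := by positivity
        linarith
    have hmono : Monotone (fun n : ℕ => {u | l + ((n:ℝ)+1)⁻¹ < |f u|}) := by
      intro n m hnm u hu
      simp only [mem_setOf_eq] at hu ⊢
      have h1 : (n:ℝ) ≤ m := Nat.cast_le.2 hnm
      have h2 : ((m:ℝ)+1)⁻¹ ≤ ((n:ℝ)+1)⁻¹ := by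
        apply inv_anti₀ (by positivity) (by linarith)
      linarith
    rw [hU, hmono.directed_le.measure_iUnion]
    refine iSup_le fun n => ?_
    have hlt : rearr μ f t < l + ((n:ℝ)+1)⁻¹ :=
      lt_of_le_of_lt hle (by nlinarith [inv_pos.2 (show (0:ℝ) < (n:ℝ)+1 by positivity)])
    obtain ⟨b, hbS, hbl⟩ := exists_lt_of_csInf_lt (rearr_set_nonempty hm hv ht) hlt
    exact le_trans (dist_antitone hbl.le) hbS.2
  · intro hd
    exact csInf_le ⟨0, fun b hb => hb.1⟩ ⟨hl.le, hd⟩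

theorem lt_rearr_iff (hm : Measurable f) (hv : VanishesInMeasure μ f) {t l : ℝ}
    (ht : 0 < t) (hl : 0 < l) :
    l < rearr μ f t ↔ ENNReal.ofReal t < μ {u | l < |f u|} := by
  rw [← not_le, ← not_le, not_iff_not]
  exact rearr_le_iff hm hv ht hl

theorem rearr_antitone (hm : Measurable f) (hv : VanishesInMeasure μ f) {s t : ℝ}
    (hs : 0 < s) (hst : s ≤ t) : rearr μ f t ≤ rearr μ f s := by
  refine csInf_le_csInf ⟨0, fun b hb => hb.1⟩ (rearr_set_nonempty hm hv hs) ?_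
  intro b hb
  exact ⟨hb.1, hb.2.trans (ENNReal.ofReal_le_ofReal hst)⟩

theorem rearr_gt_inter_Ioi (hm : Measurable f) (hv : VanishesInMeasure μ f) {l : ℝ}
    (hl : 0 < l) :
    {s : ℝ | l < rearr μ f s} ∩ Ioi 0 = Ioo 0 ((μ {u | l < |f u|}).toReal) := by
  ext s
  simp only [mem_inter_iff, mem_setOf_eq, mem_Ioi, mem_Ioo]
  constructor
  · rintro ⟨hls, hs⟩
    refine ⟨hs, ?_⟩
    have h1 := (lt_rearr_iff hm hv hs hl).1 hls
    rwa [← ENNReal.ofReal_lt_iff_lt_toReal hs.le (hv l hl).ne]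
  · rintro ⟨hs, hlt⟩
    exact ⟨(lt_rearr_iff hm hv hs hl).2
      ((ENNReal.ofReal_lt_iff_lt_toReal hs.le (hv l hl).ne).2 hlt), hs⟩

theorem rearr_of_nonpos {s : ℝ} (hs : s ≤ 0) : rearr μ f s = rearr μ f 0 := by
  unfold rearr
  rw [ENNReal.ofReal_eq_zero.2 hs]
  simp

theorem measurableSet_rearr_le (hm : Measurable f) (hv : VanishesInMeasure μ f) {l : ℝ}
    (hl : 0 < l) : MeasurableSet {s : ℝ | rearr μ f s ≤ l} := by
  have key : {s : ℝ | rearr μ f s ≤ l} ∩ Ioi 0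
      = Ici ((μ {u | l < |f u|}).toReal) ∩ Ioi 0 := by
    ext s
    simp only [mem_inter_iff, mem_setOf_eq, mem_Ioi, mem_Ici]
    constructor
    · rintro ⟨h1, hs⟩
      exact ⟨(ENNReal.le_ofReal_iff_toReal_le (hv l hl).ne hs.le).1
        ((rearr_le_iff hm hv hs hl).1 h1), hs⟩
    · rintro ⟨h1, hs⟩
      exact ⟨(rearr_le_iff hm hv hs hl).2
        ((ENNReal.le_ofReal_iff_toReal_le (hv l hl).ne hs.le).2 h1), hs⟩
  have decomp : {s : ℝ | rearr μ f s ≤ l}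
      = ({s | rearr μ f s ≤ l} ∩ Iic 0) ∪ ({s | rearr μ f s ≤ l} ∩ Ioi 0) := by
    rw [← inter_union_distrib_left, Iic_union_Ioi, inter_univ]
  have hpiece : {s : ℝ | rearr μ f s ≤ l} ∩ Iic 0
      = if rearr μ f 0 ≤ l then Iic 0 else (∅ : Set ℝ) := by
    split_ifs with h
    · ext s
      simp only [mem_inter_iff, mem_setOf_eq, mem_Iic]
      exact ⟨fun h2 => h2.2, fun h2 => ⟨by rw [rearr_of_nonpos h2]; exact h, h2⟩⟩
    · ext s
      simp only [mem_inter_iff, mem_setOf_eq, mem_Iic, mem_empty_iff_false, iff_false,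
        not_and]
      intro h2 h3
      rw [rearr_of_nonpos h3] at h2
      exact h h2
  rw [decomp, hpiece, key]
  split_ifs with h
  · exact measurableSet_Iic.union (measurableSet_Ici.inter measurableSet_Ioi)
  · exact MeasurableSet.empty.union (measurableSet_Ici.inter measurableSet_Ioi)

theorem measurable_rearr (hm : Measurable f) (hv : VanishesInMeasure μ f) :
    Measurable (rearr μ f) := by
  apply measurable_of_Iic
  intro l
  rcases lt_or_ge l 0 with hl | hl
  · have : rearr μ f ⁻¹' Iic l = ∅ := by
      ext s
      simp only [mem_preimage, mem_Iic, mem_empty_iff_false, iff_false, not_le]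
      exact lt_of_lt_of_le hl (rearr_nonneg μ f s)
    rw [this]
    exact MeasurableSet.empty
  · have : rearr μ f ⁻¹' Iic l = ⋂ n : ℕ, {s | rearr μ f s ≤ l + ((n:ℝ)+1)⁻¹} := by
      ext s
      simp only [mem_preimage, mem_Iic, mem_iInter, mem_setOf_eq]
      constructor
      · intro h n
        have h0 : (0:ℝ) < ((n:ℝ)+1)⁻¹ := by positivity
        linarith
      · intro h
        refine le_of_forall_pos_le_add fun ε hε => ?_
        obtain ⟨n, hn⟩ := exists_nat_one_div_lt hε
        rw [one_div] at hn
        linarith [h n]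
    rw [this]
    exact MeasurableSet.iInter fun n => measurableSet_rearr_le hm hv (by positivity)

theorem vol_rearr_gt (hm : Measurable f) (hv : VanishesInMeasure μ f) {l : ℝ}
    (hl : 0 < l) :
    (volume.restrict (Ioi 0)) {s : ℝ | l < rearr μ f s} = μ {u | l < |f u|} := by
  rw [Measure.restrict_apply' measurableSet_Ioi, rearr_gt_inter_Ioi hm hv hl,
    Real.volume_Ioo]
  rw [sub_zero, ENNReal.ofReal_toReal (hv l hl).ne]

/-- Lemma C : equimeasurability of the truncated parts. -/
theorem lintegral_rearr_sub (hm : Measurable f) (hv : VanishesInMeasure μ f) {c : ℝ}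
    (hc : 0 ≤ c) :
    ∫⁻ s in Ioi (0:ℝ), ENNReal.ofReal (max (rearr μ f s - c) 0)
      = ∫⁻ u, ENNReal.ofReal (max (|f u| - c) 0) ∂μ := by
  have hrm : Measurable (rearr μ f) := measurable_rearr hm hv
  have L := lintegral_eq_lintegral_meas_lt (volume.restrict (Ioi (0:ℝ)))
      (f := fun s => max (rearr μ f s - c) 0)
      (Filter.Eventually.of_forall fun s => le_max_right _ _)
      ((hrm.sub measurable_const).max measurable_const).aemeasurable
  have R := lintegral_eq_lintegral_meas_lt μ
      (f := fun u => max (|f u| - c) 0)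
      (Filter.Eventually.of_forall fun u => le_max_right _ _)
      ((hm.abs.sub measurable_const).max measurable_const).aemeasurable
  rw [L, R]
  apply setLIntegral_congr_fun measurableSet_Ioi
  refine fun l hl => ?_
  have hl' : (0:ℝ) < l := hl
  have hset1 : {s : ℝ | l < max (rearr μ f s - c) 0} = {s | l + c < rearr μ f s} := by
    ext s
    simp only [mem_setOf_eq, lt_max_iff]
    constructor
    · rintro (h | h)
      · linarith
      · linarith
    · intro h
      left; linarith
  have hset2 : {u | l < max (|f u| - c) 0} = {u | l + c < |f u|} := by
    ext u
    simp only [mem_setOf_eq, lt_max_iff]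
    constructor
    · rintro (h | h)
      · linarith
      · linarith
    · intro h
      left; linarith
  beta_reduce
  rw [hset1, hset2, vol_rearr_gt hm hv (by linarith : (0:ℝ) < l + c)]

/-- Double layer-cake representation of the integral of a product. -/
theorem double_layercake {β : Type*} [MeasurableSpace β] (ν : Measure β) [SFinite ν]
    {f g : β → ℝ} (hf : Measurable f) (hg : Measurable g)
    (hf0 : ∀ u, 0 ≤ f u) (hg0 : ∀ u, 0 ≤ g u) :
    ∫⁻ u, ENNReal.ofReal (f u) * ENNReal.ofReal (g u) ∂ν
      = ∫⁻ l in Ioi (0:ℝ), ∫⁻ m in Ioi (0:ℝ), ν ({u | m < g u} ∩ {u | l < f u}) := by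
  have step1 : ∀ u, ENNReal.ofReal (f u) * ENNReal.ofReal (g u)
      = ∫⁻ l in Ioi (0:ℝ), (if l < f u then ENNReal.ofReal (g u) else 0) := by
    intro u
    have hind : (fun l : ℝ => if l < f u then ENNReal.ofReal (g u) else 0)
        = (Iio (f u)).indicator (fun _ => ENNReal.ofReal (g u)) := by
      funext l
      simp [Set.indicator_apply]
    rw [hind, lintegral_indicator_const measurableSet_Iio,
      Measure.restrict_apply measurableSet_Iio]
    have hii : Iio (f u) ∩ Ioi (0:ℝ) = Ioo 0 (f u) := by
      ext l
      simp only [mem_inter_iff, mem_Iio, mem_Ioi, mem_Ioo]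
      exact and_comm
    rw [hii, Real.volume_Ioo, sub_zero, mul_comm]
  have hFm : Measurable (Function.uncurry fun u l =>
      if l < f u then ENNReal.ofReal (g u) else 0) := by
    apply Measurable.ite
    · exact measurableSet_lt measurable_snd (hf.comp measurable_fst)
    · exact ENNReal.measurable_ofReal.comp (hg.comp measurable_fst)
    · exact measurable_const
  calc ∫⁻ u, ENNReal.ofReal (f u) * ENNReal.ofReal (g u) ∂ν
      = ∫⁻ u, (∫⁻ l in Ioi (0:ℝ), (if l < f u then ENNReal.ofReal (g u) else 0)) ∂ν :=
        lintegral_congr step1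
    _ = ∫⁻ l in Ioi (0:ℝ), ∫⁻ u, (if l < f u then ENNReal.ofReal (g u) else 0) ∂ν :=
        lintegral_lintegral_swap hFm.aemeasurable
    _ = ∫⁻ l in Ioi (0:ℝ), ∫⁻ m in Ioi (0:ℝ), ν ({u | m < g u} ∩ {u | l < f u}) := by
        refine lintegral_congr fun l => ?_
        have hA : MeasurableSet {u | l < f u} := measurableSet_lt measurable_const hf
        have hind : (fun u => if l < f u then ENNReal.ofReal (g u) else 0)
            = ({u | l < f u}).indicator (fun u => ENNReal.ofReal (g u)) := by
          funext u
          simp [Set.indicator_apply]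
        rw [hind, lintegral_indicator hA,
          lintegral_eq_lintegral_meas_lt (ν.restrict {u | l < f u})
            (Filter.Eventually.of_forall fun u => hg0 u) hg.aemeasurable]
        refine lintegral_congr fun m => ?_
        rw [Measure.restrict_apply (measurableSet_lt measurable_const hg)]

theorem vanish_mul {x y : α → ℝ} (hxv : VanishesInMeasure μ x)
    (hyv : VanishesInMeasure μ y) : VanishesInMeasure μ (x * y) := by
  intro ε hε
  have hsub : {u | ε < |(x*y) u|} ⊆ {u | Real.sqrt ε < |x u|} ∪ {u | Real.sqrt ε < |y u|} := by
    intro u hu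
    simp only [mem_setOf_eq, Pi.mul_apply] at hu
    by_contra hcon
    simp only [mem_union, mem_setOf_eq, not_or, not_lt] at hcon
    obtain ⟨h1, h2⟩ := hcon
    have hle : |x u * y u| ≤ ε := by
      rw [abs_mul]
      calc |x u| * |y u| ≤ Real.sqrt ε * Real.sqrt ε :=
            mul_le_mul h1 h2 (abs_nonneg _) (Real.sqrt_nonneg _)
        _ = ε := Real.mul_self_sqrt hε.le
    exact absurd hu (not_lt.2 hle)
  exact lt_of_le_of_lt (measure_mono hsub)
    (lt_of_le_of_lt (measure_union_le _ _)
      (ENNReal.add_lt_top.2 ⟨hxv _ (Real.sqrt_pos.2 hε), hyv _ (Real.sqrt_pos.2 hε)⟩))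

/-- Hardy–Littlewood type inequality for the truncated product. -/
theorem hardy_littlewood [SFinite μ] {x y : α → ℝ} (hxm : Measurable x) (hym : Measurable y)
    (hxv : VanishesInMeasure μ x) (hyv : VanishesInMeasure μ y) {a : ℝ} (ha : 0 ≤ a) :
    ∫⁻ u, ENNReal.ofReal (max (|x u| - a) 0) * ENNReal.ofReal (|y u|) ∂μ
      ≤ ∫⁻ s in Ioi (0:ℝ),
          ENNReal.ofReal (max (rearr μ x s - a) 0) * ENNReal.ofReal (rearr μ y s) := by
  have hfm : Measurable (fun u => max (|x u| - a) 0) :=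
    (hxm.abs.sub measurable_const).max measurable_const
  have hXm : Measurable (rearr μ x) := measurable_rearr hxm hxv
  have hYm : Measurable (rearr μ y) := measurable_rearr hym hyv
  rw [double_layercake μ hfm hym.abs (fun u => le_max_right _ _) (fun u => abs_nonneg _)]
  rw [double_layercake (volume.restrict (Ioi 0)) (f := fun s => max (rearr μ x s - a) 0)
    ((hXm.sub measurable_const).max measurable_const) hYm
    (fun s => le_max_right _ _) (fun s => rearr_nonneg μ y s)]
  refine lintegral_mono_ae ?_
  rw [ae_restrict_iff' measurableSet_Ioi]
  refine Filter.Eventually.of_forall fun l hl => ?_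
  refine lintegral_mono_ae ?_
  rw [ae_restrict_iff' measurableSet_Ioi]
  refine Filter.Eventually.of_forall fun m hm' => ?_
  have hl' : (0:ℝ) < l := hl
  have hm'' : (0:ℝ) < m := hm'
  have hla : (0:ℝ) < l + a := by linarith
  -- rewrite the truncated-max sets
  have hsetx : {u | l < max (|x u| - a) 0} = {u | l + a < |x u|} := by
    ext u
    simp only [mem_setOf_eq, lt_max_iff]
    constructor
    · rintro (h | h) <;> linarith
    · intro h; left; linarith
  have hsetX : {s : ℝ | l < max (rearr μ x s - a) 0} = {s | l + a < rearr μ x s} := by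
    ext s
    simp only [mem_setOf_eq, lt_max_iff]
    constructor
    · rintro (h | h) <;> linarith
    · intro h; left; linarith
  rw [hsetx, hsetX]
  -- compute the right-hand side measure
  have hfinx : μ {u | l + a < |x u|} ≠ ⊤ := (hxv _ hla).ne
  have hfiny : μ {u | m < |y u|} ≠ ⊤ := (hyv _ hm'').ne
  have hRHS : (volume.restrict (Ioi 0))
      ({s : ℝ | m < rearr μ y s} ∩ {s : ℝ | l + a < rearr μ x s})
      = min (μ {u | m < |y u|}) (μ {u | l + a < |x u|}) := by
    rw [Measure.restrict_apply' measurableSet_Ioi]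
    have hss : ({s : ℝ | m < rearr μ y s} ∩ {s : ℝ | l + a < rearr μ x s}) ∩ Ioi 0
        = ({s : ℝ | m < rearr μ y s} ∩ Ioi 0) ∩ ({s : ℝ | l + a < rearr μ x s} ∩ Ioi 0) := by
      ext s
      simp only [mem_inter_iff, mem_setOf_eq, mem_Ioi]
      tauto
    rw [hss, rearr_gt_inter_Ioi hym hyv hm'', rearr_gt_inter_Ioi hxm hxv hla,
      Set.Ioo_inter_Ioo]
    simp only [max_self, sup_idem]
    rw [Real.volume_Ioo, sub_zero]
    have hmin : ENNReal.ofReal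
        (min ((μ {u | m < |y u|}).toReal) ((μ {u | l + a < |x u|}).toReal))
        = min (ENNReal.ofReal ((μ {u | m < |y u|}).toReal))
            (ENNReal.ofReal ((μ {u | l + a < |x u|}).toReal)) :=
      Monotone.map_min (fun _ _ h => ENNReal.ofReal_le_ofReal h)
    rw [hmin, ENNReal.ofReal_toReal hfiny, ENNReal.ofReal_toReal hfinx]
  rw [hRHS]
  exact le_min (measure_mono (fun u hu => hu.1)) (measure_mono (fun u hu => hu.2))

end aux

instance : SFinite mu0 := by
  unfold mu0
  infer_instance

/-- Submajorization of a product by the product of decreasing rearrangements: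
`∫₀ᵗ (xy)^*(s) ds ≤ ∫₀ᵗ x^*(s) y^*(s) ds` for all `t > 0`. -/
theorem mul_submajorized {x y : ℝ → ℝ} (hxm : Measurable x) (hym : Measurable y)
    (hxv : VanishesInMeasure mu0 x) (hyv : VanishesInMeasure mu0 y) :
    ∀ t : ℝ, 0 < t →
      (∫⁻ s in Set.Ioc 0 t, ENNReal.ofReal (rearr mu0 (x * y) s))
        ≤ ∫⁻ s in Set.Ioc 0 t, ENNReal.ofReal (rearr mu0 x s * rearr mu0 y s) := by
  intro t ht
  have hxym : Measurable (x * y) := hxm.mul hym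
  have hxyv : VanishesInMeasure mu0 (x * y) := vanish_mul hxv hyv
  set a := rearr mu0 x t with ha_def
  set b := rearr mu0 y t with hb_def
  have ha0 : 0 ≤ a := rearr_nonneg _ _ _
  have hb0 : 0 ≤ b := rearr_nonneg _ _ _
  have hZm : Measurable (rearr mu0 (x * y)) := measurable_rearr hxym hxyv
  have hXm : Measurable (rearr mu0 x) := measurable_rearr hxm hxv
  have hYm : Measurable (rearr mu0 y) := measurable_rearr hym hyv
  -- abbreviations for the two upper-bound integrands on the rearrangement side
  set A : ℝ → ℝ≥0∞ := fun s =>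
    ENNReal.ofReal (max (rearr mu0 x s - a) 0) * ENNReal.ofReal (rearr mu0 y s) with hA_def
  set B : ℝ → ℝ≥0∞ := fun s => ENNReal.ofReal (max (rearr mu0 y s - b) 0) with hB_def
  have hAm : Measurable A :=
    (ENNReal.measurable_ofReal.comp ((hXm.sub measurable_const).max measurable_const)).mul
      (ENNReal.measurable_ofReal.comp hYm)
  have hBm : Measurable B :=
    ENNReal.measurable_ofReal.comp ((hYm.sub measurable_const).max measurable_const)
  -- Step 1–2: peel off the constant a*b and extend the domain
  have step12 :
      (∫⁻ s in Set.Ioc 0 t, ENNReal.ofReal (rearr mu0 (x * y) s))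
        ≤ ENNReal.ofReal (a * b) * ENNReal.ofReal t
          + ∫⁻ s in Set.Ioi (0:ℝ),
              ENNReal.ofReal (max (rearr mu0 (x * y) s - a * b) 0) := by
    have p1 : ∀ s, ENNReal.ofReal (rearr mu0 (x * y) s)
        ≤ ENNReal.ofReal (a * b)
          + ENNReal.ofReal (max (rearr mu0 (x * y) s - a * b) 0) := by
      intro s
      rw [← ENNReal.ofReal_add (by positivity) (le_max_right _ _)]
      apply ENNReal.ofReal_le_ofReal
      have h1 := le_max_left (rearr mu0 (x * y) s - a * b) 0
      linarith
    calc (∫⁻ s in Set.Ioc 0 t, ENNReal.ofReal (rearr mu0 (x * y) s))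
        ≤ ∫⁻ s in Set.Ioc 0 t,
            (ENNReal.ofReal (a * b)
              + ENNReal.ofReal (max (rearr mu0 (x * y) s - a * b) 0)) :=
          lintegral_mono fun s => p1 s
      _ = ENNReal.ofReal (a * b) * volume (Set.Ioc (0:ℝ) t)
            + ∫⁻ s in Set.Ioc 0 t,
                ENNReal.ofReal (max (rearr mu0 (x * y) s - a * b) 0) := by
          rw [lintegral_add_left measurable_const, setLIntegral_const]
      _ ≤ ENNReal.ofReal (a * b) * ENNReal.ofReal t
            + ∫⁻ s in Set.Ioi (0:ℝ),
                ENNReal.ofReal (max (rearr mu0 (x * y) s - a * b) 0) := by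
          refine add_le_add ?_ (lintegral_mono_set Set.Ioc_subset_Ioi_self)
          rw [Real.volume_Ioc, sub_zero]
      -- done
  -- Lemma C for x*y
  have lemC_xy := lintegral_rearr_sub hxym hxyv (mul_nonneg ha0 hb0)
  -- Lemma C for y
  have lemC_y := lintegral_rearr_sub hym hyv hb0
  -- pointwise decomposition on the function side
  have T4 : (∫⁻ u, ENNReal.ofReal (max (|(x * y) u| - a * b) 0) ∂mu0)
      ≤ (∫⁻ u, ENNReal.ofReal (max (|x u| - a) 0) * ENNReal.ofReal (|y u|) ∂mu0)
        + ENNReal.ofReal a * ∫⁻ u, ENNReal.ofReal (max (|y u| - b) 0) ∂mu0 := by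
    have hpt : ∀ u, ENNReal.ofReal (max (|(x * y) u| - a * b) 0)
        ≤ ENNReal.ofReal (max (|x u| - a) 0) * ENNReal.ofReal (|y u|)
          + ENNReal.ofReal a * ENNReal.ofReal (max (|y u| - b) 0) := by
      intro u
      rw [← ENNReal.ofReal_mul (le_max_right _ _), ← ENNReal.ofReal_mul ha0,
        ← ENNReal.ofReal_add (mul_nonneg (le_max_right _ _) (abs_nonneg _))
          (mul_nonneg ha0 (le_max_right _ _))]
      apply ENNReal.ofReal_le_ofReal
      have h1 : |x u| ≤ a + max (|x u| - a) 0 := by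
        have := le_max_left (|x u| - a) 0; linarith
      have h2 : |y u| ≤ b + max (|y u| - b) 0 := by
        have := le_max_left (|y u| - b) 0; linarith
      have hy0 : (0:ℝ) ≤ |y u| := abs_nonneg _
      have hm1 : (0:ℝ) ≤ max (|x u| - a) 0 := le_max_right _ _
      have hm2 : (0:ℝ) ≤ max (|y u| - b) 0 := le_max_right _ _
      have key : |(x * y) u| ≤ a * b
          + (max (|x u| - a) 0 * |y u| + a * max (|y u| - b) 0) := by
        have habs : |(x * y) u| = |x u| * |y u| := by rw [Pi.mul_apply, abs_mul]
        rw [habs]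
        calc |x u| * |y u| ≤ (a + max (|x u| - a) 0) * |y u| :=
              mul_le_mul_of_nonneg_right h1 hy0
          _ = a * |y u| + max (|x u| - a) 0 * |y u| := by ring
          _ ≤ a * (b + max (|y u| - b) 0) + max (|x u| - a) 0 * |y u| :=
              add_le_add_left (mul_le_mul_of_nonneg_left h2 ha0) _
          _ = a * b + (max (|x u| - a) 0 * |y u| + a * max (|y u| - b) 0) := by ring
      rcases le_total (|(x * y) u| - a * b) 0 with h | h
      · rw [max_eq_right h]
        positivity
      · rw [max_eq_left h]
        linarith
    calc (∫⁻ u, ENNReal.ofReal (max (|(x * y) u| - a * b) 0) ∂mu0)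
        ≤ ∫⁻ u, (ENNReal.ofReal (max (|x u| - a) 0) * ENNReal.ofReal (|y u|)
            + ENNReal.ofReal a * ENNReal.ofReal (max (|y u| - b) 0)) ∂mu0 :=
          lintegral_mono hpt
      _ = (∫⁻ u, ENNReal.ofReal (max (|x u| - a) 0) * ENNReal.ofReal (|y u|) ∂mu0)
            + ∫⁻ u, ENNReal.ofReal a * ENNReal.ofReal (max (|y u| - b) 0) ∂mu0 := by
          rw [lintegral_add_left]
          exact (ENNReal.measurable_ofReal.comp
            ((hxm.abs.sub measurable_const).max measurable_const)).mul
            (ENNReal.measurable_ofReal.comp hym.abs)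
      _ = (∫⁻ u, ENNReal.ofReal (max (|x u| - a) 0) * ENNReal.ofReal (|y u|) ∂mu0)
            + ENNReal.ofReal a * ∫⁻ u, ENNReal.ofReal (max (|y u| - b) 0) ∂mu0 := by
          rw [lintegral_const_mul]
          exact ENNReal.measurable_ofReal.comp
            ((hym.abs.sub measurable_const).max measurable_const)
  -- Hardy–Littlewood
  have T5 := hardy_littlewood hxm hym hxv hyv ha0
  -- shrink the domains from Ioi 0 to Ioc 0 t
  have habsorb : ∀ (F : ℝ → ℝ≥0∞), (∀ s, t < s → F s = 0) →
      (∫⁻ s in Set.Ioi (0:ℝ), F s) = ∫⁻ s in Set.Ioc 0 t, F s := by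
    intro F hF
    rw [← Set.Ioc_union_Ioi_eq_Ioi ht.le,
      lintegral_union measurableSet_Ioi (Set.Ioc_disjoint_Ioi le_rfl)]
    have hzero : (∫⁻ s in Set.Ioi t, F s) = 0 := by
      have : (∫⁻ s in Set.Ioi t, F s) = ∫⁻ _ in Set.Ioi t, (0:ℝ≥0∞) :=
        setLIntegral_congr_fun measurableSet_Ioi
          (fun s hs => hF s hs)
      rw [this, lintegral_zero]
    rw [hzero, add_zero]
  have shrink1 : (∫⁻ s in Set.Ioi (0:ℝ), A s) = ∫⁻ s in Set.Ioc 0 t, A s := by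
    apply habsorb
    intro s hs
    have hle : rearr mu0 x s ≤ a := rearr_antitone hxm hxv ht hs.le
    rw [hA_def]
    simp only
    rw [max_eq_right (by linarith), ENNReal.ofReal_zero, zero_mul]
  have shrink2 : (∫⁻ s in Set.Ioi (0:ℝ), B s) = ∫⁻ s in Set.Ioc 0 t, B s := by
    apply habsorb
    intro s hs
    have hle : rearr mu0 y s ≤ b := rearr_antitone hym hyv ht hs.le
    rw [hB_def]
    simp only
    rw [max_eq_right (by linarith), ENNReal.ofReal_zero]
  -- identify the target integrand with the decomposed sum on Ioc 0 t
  have split : (∫⁻ s in Set.Ioc 0 t, ENNReal.ofReal (rearr mu0 x s * rearr mu0 y s))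
      = ∫⁻ s in Set.Ioc 0 t,
          (ENNReal.ofReal (a * b) + (A s + ENNReal.ofReal a * B s)) := by
    apply setLIntegral_congr_fun measurableSet_Ioc
    refine fun s hs => ?_
    have hXa : a ≤ rearr mu0 x s := rearr_antitone hxm hxv hs.1 hs.2
    have hYb : b ≤ rearr mu0 y s := rearr_antitone hym hyv hs.1 hs.2
    have hY0 : 0 ≤ rearr mu0 y s := rearr_nonneg _ _ _
    rw [hA_def, hB_def]
    simp only
    rw [max_eq_left (by linarith), max_eq_left (by linarith)]
    rw [← ENNReal.ofReal_mul (by linarith), ← ENNReal.ofReal_mul ha0,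
      ← ENNReal.ofReal_add (mul_nonneg (by linarith) hY0)
        (mul_nonneg ha0 (by linarith)),
      ← ENNReal.ofReal_add (mul_nonneg ha0 hb0) (by nlinarith)]
    congr 1
    ring
  have combine : (∫⁻ s in Set.Ioc 0 t,
        (ENNReal.ofReal (a * b) + (A s + ENNReal.ofReal a * B s)))
      = ENNReal.ofReal (a * b) * ENNReal.ofReal t
        + ((∫⁻ s in Set.Ioc 0 t, A s)
            + ENNReal.ofReal a * ∫⁻ s in Set.Ioc 0 t, B s) := by
    rw [lintegral_add_left measurable_const, setLIntegral_const, Real.volume_Ioc,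
      sub_zero, lintegral_add_left hAm, lintegral_const_mul _ hBm]
  calc (∫⁻ s in Set.Ioc 0 t, ENNReal.ofReal (rearr mu0 (x * y) s))
      ≤ ENNReal.ofReal (a * b) * ENNReal.ofReal t
          + ∫⁻ s in Set.Ioi (0:ℝ),
              ENNReal.ofReal (max (rearr mu0 (x * y) s - a * b) 0) := step12
    _ = ENNReal.ofReal (a * b) * ENNReal.ofReal t
          + ∫⁻ u, ENNReal.ofReal (max (|(x * y) u| - a * b) 0) ∂mu0 := by rw [lemC_xy]
    _ ≤ ENNReal.ofReal (a * b) * ENNReal.ofReal t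
          + ((∫⁻ u, ENNReal.ofReal (max (|x u| - a) 0) * ENNReal.ofReal (|y u|) ∂mu0)
              + ENNReal.ofReal a * ∫⁻ u, ENNReal.ofReal (max (|y u| - b) 0) ∂mu0) :=
        add_le_add_right T4 _
    _ ≤ ENNReal.ofReal (a * b) * ENNReal.ofReal t
          + ((∫⁻ s in Set.Ioi (0:ℝ), A s)
              + ENNReal.ofReal a * ∫⁻ s in Set.Ioi (0:ℝ), B s) := by
        refine add_le_add_right (add_le_add T5 ?_) _
        rw [← lemC_y]
    _ = ENNReal.ofReal (a * b) * ENNReal.ofReal t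
          + ((∫⁻ s in Set.Ioc 0 t, A s)
              + ENNReal.ofReal a * ∫⁻ s in Set.Ioc 0 t, B s) := by
        rw [shrink1, shrink2]
    _ = ∫⁻ s in Set.Ioc 0 t, ENNReal.ofReal (rearr mu0 x s * rearr mu0 y s) := by
        rw [split, combine]
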